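/- Let ṽ : ℝ³ → ℝ² and θ : ℝ³ → ℝ be smooth and 1-periodic in the horizontal variables, and suppose ∫_{−h}^0 div_H ṽ(x_H,ζ) dζ = 0 for every x_H. Set w(ṽ)(x_H,x₃) = −∫_{−h}^{x₃} div_H ṽ(x_H,ζ) dζ, ũ = (ṽ, w(ṽ)), and Θ(x_H,x₃) = ∫_{−h}^{x₃} θ(x_H,ζ) dζ. Then ∫_𝒪 [ Θ² θ (ũ·∇)θ + θ² Θ ( ∫_{−h}^{x₃} [(ũ·∇)θ](x_H,ζ) dζ ) ] dx = ∫_𝒪 θ² Θ [ ∫_{−h}^{x₃} [(ṽ·∇_H)θ](x_H,ζ) dζ − [(ṽ·∇_H)Θ](x) + ∫_{−h}^{x₃} div_H ṽ(x_H,ζ) θ(x_H,ζ) dζ ] dx. -/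

import Mathlib

open MeasureTheory Real

noncomputable section

/-- Partial derivative of `f` in the `j`-th coordinate direction. -/
def pd (j : Fin 3) (f : (Fin 3 → ℝ) → ℝ) (x : Fin 3 → ℝ) : ℝ :=
  fderiv ℝ f x (Pi.single j 1)

/-- `f` is 1-periodic in the two horizontal variables. -/
def HorizPeriodic (f : (Fin 3 → ℝ) → ℝ) : Prop :=
  ∀ x : Fin 3 → ℝ, f (x + Pi.single 0 1) = f x ∧ f (x + Pi.single 1 1) = f x

/-- The fundamental domain `[0,1] × [0,1] × [-h,0]` of `𝒪 = 𝕋² × (-h,0)`. -/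
def Box (h : ℝ) : Set (Fin 3 → ℝ) := Set.Icc ![0, 0, -h] ![1, 1, 0]

/-- Horizontal divergence `div_H v = ∂₁ v¹ + ∂₂ v²`. -/
def divH (v : Fin 2 → (Fin 3 → ℝ) → ℝ) (x : Fin 3 → ℝ) : ℝ :=
  pd 0 (v 0) x + pd 1 (v 1) x

/-- Horizontal advection `(v · ∇_H) g = v¹ ∂₁ g + v² ∂₂ g`. -/
def advH (v : Fin 2 → (Fin 3 → ℝ) → ℝ) (g : (Fin 3 → ℝ) → ℝ) (x : Fin 3 → ℝ) : ℝ :=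
  v 0 x * pd 0 g x + v 1 x * pd 1 g x

/-- Advection `(u · ∇) g` by the full velocity field `u = (v, w)`. -/
def adv3 (v : Fin 2 → (Fin 3 → ℝ) → ℝ) (w g : (Fin 3 → ℝ) → ℝ) (x : Fin 3 → ℝ) : ℝ :=
  v 0 x * pd 0 g x + v 1 x * pd 1 g x + w x * pd 2 g x

/-- Vertical velocity `w(v)(x) = -∫_{-h}^{x₃} div_H v (x_H, ζ) dζ`. -/
def wv (h : ℝ) (v : Fin 2 → (Fin 3 → ℝ) → ℝ) (x : Fin 3 → ℝ) : ℝ :=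
  -(∫ ζ in (-h)..(x 2), divH v (Function.update x 2 ζ))

/-- Vertical primitive `Θ(x) = ∫_{-h}^{x₃} θ(x_H, ζ) dζ`. -/
def vint (h : ℝ) (θ : (Fin 3 → ℝ) → ℝ) (x : Fin 3 → ℝ) : ℝ :=
  ∫ ζ in (-h)..(x 2), θ (Function.update x 2 ζ)


/-- update as affine map: the linear part. -/

def updCLM : (Fin 3 → ℝ) →L[ℝ] (Fin 3 → ℝ) :=
  ContinuousLinearMap.pi (fun i => if i = 2 then 0 else ContinuousLinearMap.proj i)

lemma updCLM_apply (d : Fin 3 → ℝ) (i : Fin 3) :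
    updCLM d i = if i = 2 then 0 else d i := by
  simp only [updCLM, ContinuousLinearMap.pi_apply]
  rcases eq_or_ne i 2 with h | h <;> simp [h]

lemma update_eq (x : Fin 3 → ℝ) (ζ : ℝ) :
    Function.update x 2 ζ = updCLM x + ζ • (Pi.single 2 1 : Fin 3 → ℝ) := by
  funext i
  rcases eq_or_ne i 2 with h | h <;>
    simp [Function.update_apply, updCLM_apply, h, Pi.single_eq_of_ne]

lemma updCLM_single_two : updCLM (Pi.single 2 1 : Fin 3 → ℝ) = 0 := by
  funext i
  rcases eq_or_ne i 2 with h | h <;> simp [updCLM_apply, h, Pi.single_eq_of_ne]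

lemma updCLM_single (j : Fin 3) (hj : j ≠ 2) :
    updCLM (Pi.single j 1 : Fin 3 → ℝ) = Pi.single j 1 := by
  funext i
  rcases eq_or_ne i 2 with h | h
  · subst h; simp [updCLM_apply, Pi.single_eq_of_ne (Ne.symm hj)]
  · simp [updCLM_apply, h]



/-- The vertical-primitive operator. -/
def Iv (h : ℝ) (f : (Fin 3 → ℝ) → ℝ) (x : Fin 3 → ℝ) : ℝ :=
  ∫ ζ in (-h)..(x 2), f (Function.update x 2 ζ)

lemma continuous_updFun {f : (Fin 3 → ℝ) → ℝ} (hf : Continuous f) :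
    Continuous fun p : (Fin 3 → ℝ) × ℝ => f (Function.update p.1 2 p.2) := by
  have h0 : Continuous fun p : (Fin 3 → ℝ) × ℝ =>
      updCLM p.1 + p.2 • (Pi.single 2 1 : Fin 3 → ℝ) :=
    (updCLM.continuous.comp continuous_fst).add (continuous_snd.smul continuous_const)
  simpa only [update_eq, Function.comp_def] using hf.comp h0

lemma continuous_line {f : (Fin 3 → ℝ) → ℝ} (hf : Continuous f) (x : Fin 3 → ℝ) :
    Continuous fun ζ : ℝ => f (Function.update x 2 ζ) :=
  (continuous_updFun hf).comp (Continuous.prodMk_right x)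

lemma hasDerivAt_line {f : (Fin 3 → ℝ) → ℝ} (hf : ContDiff ℝ (⊤ : ℕ∞) f) (x : Fin 3 → ℝ)
    (t : ℝ) :
    HasDerivAt (fun ζ => f (Function.update x 2 ζ)) (pd 2 f (Function.update x 2 t)) t := by
  have hinner : HasDerivAt (fun ζ : ℝ => updCLM x + ζ • (Pi.single 2 1 : Fin 3 → ℝ))
      (Pi.single 2 1 : Fin 3 → ℝ) t := by
    simpa using ((hasDerivAt_id t).smul_const (Pi.single 2 1 : Fin 3 → ℝ)).const_add (updCLM x)
  have hF : HasFDerivAt f (fderiv ℝ f (Function.update x 2 t)) (Function.update x 2 t) :=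
    (hf.differentiable (by simp)).differentiableAt.hasFDerivAt
  rw [update_eq x t] at hF
  have := hF.comp_hasDerivAt t hinner
  simpa only [← update_eq, pd, Function.comp_def] using this

lemma hasFDerivAt_updFun {f : (Fin 3 → ℝ) → ℝ} (hf : ContDiff ℝ (⊤ : ℕ∞) f) (ζ : ℝ)
    (x : Fin 3 → ℝ) :
    HasFDerivAt (fun y => f (Function.update y 2 ζ))
      ((fderiv ℝ f (Function.update x 2 ζ)).comp updCLM) x := by
  have hinner : HasFDerivAt (fun y : Fin 3 → ℝ => updCLM y + ζ • (Pi.single 2 1 : Fin 3 → ℝ))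
      (updCLM : (Fin 3 → ℝ) →L[ℝ] (Fin 3 → ℝ)) x :=
    updCLM.hasFDerivAt.add_const _
  have hF : HasFDerivAt f (fderiv ℝ f (Function.update x 2 ζ)) (Function.update x 2 ζ) :=
    (hf.differentiable (by simp)).differentiableAt.hasFDerivAt
  rw [update_eq x ζ] at hF
  have := hF.comp x hinner
  simpa only [← update_eq, Function.comp_def] using this

/-- The full derivative of `Iv h f`. -/
def dIv (h : ℝ) (f : (Fin 3 → ℝ) → ℝ) (x : Fin 3 → ℝ) : (Fin 3 → ℝ) →L[ℝ] ℝ :=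
  (∫ ζ in (-h)..(x 2), (fderiv ℝ f (Function.update x 2 ζ)).comp updCLM)
    + f x • (ContinuousLinearMap.proj 2 : ((Fin 3 → ℝ) →L[ℝ] ℝ))

lemma hasFDerivAt_Iv {f : (Fin 3 → ℝ) → ℝ} (hf : ContDiff ℝ (⊤ : ℕ∞) f) (h : ℝ)
    (x0 : Fin 3 → ℝ) : HasFDerivAt (Iv h f) (dIv h f x0) x0 := by
  have hint : ∀ (x : Fin 3 → ℝ) (a b : ℝ),
      IntervalIntegrable (fun ζ => f (Function.update x 2 ζ)) volume a b :=
    fun x a b => (continuous_line hf.continuous x).intervalIntegrable a b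
  have hsplit : ∀ x : Fin 3 → ℝ, Iv h f x
      = (∫ ζ in (-h)..(x0 2), f (Function.update x 2 ζ))
        + ∫ ζ in (x0 2)..(x 2), f (Function.update x 2 ζ) := by
    intro x
    rw [Iv, ← intervalIntegral.integral_add_adjacent_intervals (hint x (-h) (x0 2))
      (hint x (x0 2) (x 2))]
  -- the part with fixed endpoints: differentiate under the integral sign
  have hP : HasFDerivAt (fun x : Fin 3 → ℝ => ∫ ζ in (-h)..(x0 2), f (Function.update x 2 ζ))
      (∫ ζ in (-h)..(x0 2), (fderiv ℝ f (Function.update x0 2 ζ)).comp updCLM) x0 := by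
    have hcontF' : Continuous fun p : (Fin 3 → ℝ) × ℝ =>
        (fderiv ℝ f (Function.update p.1 2 p.2)).comp updCLM := by
      have h0 : Continuous fun p : (Fin 3 → ℝ) × ℝ =>
          updCLM p.1 + p.2 • (Pi.single 2 1 : Fin 3 → ℝ) :=
        (updCLM.continuous.comp continuous_fst).add (continuous_snd.smul continuous_const)
      have h1 : Continuous fun p : (Fin 3 → ℝ) × ℝ =>
          fderiv ℝ f (Function.update p.1 2 p.2) := by
        simpa only [update_eq, Function.comp_def] using (hf.continuous_fderiv (by simp)).comp h0
      exact h1.clm_comp continuous_const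
    obtain ⟨C, hC⟩ := IsCompact.exists_bound_of_continuousOn
      ((isCompact_closedBall x0 1).prod isCompact_uIcc)
      hcontF'.continuousOn (f := fun p : (Fin 3 → ℝ) × ℝ =>
        (fderiv ℝ f (Function.update p.1 2 p.2)).comp updCLM)
    refine intervalIntegral.hasFDerivAt_integral_of_dominated_of_fderiv_le
      (F := fun x t => f (Function.update x 2 t))
      (F' := fun x t => (fderiv ℝ f (Function.update x 2 t)).comp updCLM)
      (bound := fun _ => C) (s := Metric.ball x0 1) (Metric.ball_mem_nhds x0 one_pos) ?_ (hint x0 (-h) (x0 2)) ?_ ?_ ?_ ?_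
    · exact Filter.Eventually.of_forall fun x =>
        (continuous_line hf.continuous x).aestronglyMeasurable
    · exact ((hcontF'.comp (Continuous.prodMk_right x0)).aestronglyMeasurable)
    · refine Filter.Eventually.of_forall fun t ht => fun x hx => ?_
      exact hC (x, t) ⟨Metric.ball_subset_closedBall hx, Set.Ioc_subset_Icc_self ht⟩
    · exact intervalIntegrable_const
    · exact Filter.Eventually.of_forall fun t _ x _ => hasFDerivAt_updFun hf t x
  -- the moving-endpoint part
  have hQ : HasFDerivAt (fun x : Fin 3 → ℝ => ∫ ζ in (x0 2)..(x 2), f (Function.update x 2 ζ))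
      (f x0 • (ContinuousLinearMap.proj 2 : ((Fin 3 → ℝ) →L[ℝ] ℝ))) x0 := by
    refine hasFDerivAt_iff_isLittleO.2 ?_
    rw [Asymptotics.isLittleO_iff]
    intro c hc
    have hcont : ContinuousAt (fun p : (Fin 3 → ℝ) × ℝ => f (Function.update p.1 2 p.2))
        (x0, x0 2) := (continuous_updFun hf.continuous).continuousAt
    rw [Metric.continuousAt_iff] at hcont
    obtain ⟨δ, hδpos, hδ⟩ := hcont c hc
    filter_upwards [Metric.ball_mem_nhds x0 hδpos] with x hx
    have hx' : ‖x - x0‖ < δ := by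
      simpa [dist_eq_norm] using hx
    have key : ∀ ζ ∈ Set.uIoc (x0 2) (x 2),
        ‖f (Function.update x 2 ζ) - f x0‖ ≤ c := by
      intro ζ hζ
      have h1 : dist ζ (x0 2) ≤ dist (x0 2) (x 2) :=
        Real.dist_le_of_mem_uIcc (Set.Ioc_subset_Icc_self hζ) Set.left_mem_uIcc
      have h2 : dist (x0 2) (x 2) ≤ ‖x - x0‖ := by
        have := norm_le_pi_norm (x - x0) 2
        simpa [Real.dist_eq, abs_sub_comm] using this
      have hdist : dist (x, ζ) (x0, x0 2) < δ := by
        rw [Prod.dist_eq]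
        exact max_lt (by simpa [dist_eq_norm] using hx') (lt_of_le_of_lt (h1.trans h2) hx')
      have := hδ hdist
      rw [Function.update_eq_self] at this
      simpa [Real.dist_eq] using this.le
    -- compute
    have hconst : IntervalIntegrable (fun _ : ℝ => f x0) volume (x0 2) (x 2) :=
      intervalIntegrable_const
    have hsub : (∫ ζ in (x0 2)..(x 2), f (Function.update x 2 ζ)) - f x0 * (x 2 - x0 2)
        = ∫ ζ in (x0 2)..(x 2), (f (Function.update x 2 ζ) - f x0) := by
      rw [intervalIntegral.integral_sub (hint x (x0 2) (x 2)) hconst,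
        intervalIntegral.integral_const, smul_eq_mul, mul_comm]
    have hbound := intervalIntegral.norm_integral_le_of_norm_le_const key
    simp only [intervalIntegral.integral_same, sub_zero, ContinuousLinearMap.coe_smul',
      Pi.smul_apply, ContinuousLinearMap.proj_apply, Pi.sub_apply, smul_eq_mul]
    calc ‖(∫ ζ in (x0 2)..(x 2), f (Function.update x 2 ζ)) - f x0 * (x 2 - x0 2)‖
        = ‖∫ ζ in (x0 2)..(x 2), (f (Function.update x 2 ζ) - f x0)‖ := by rw [hsub]
      _ ≤ c * |x 2 - x0 2| := hbound
      _ ≤ c * ‖x - x0‖ := by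
          refine mul_le_mul_of_nonneg_left ?_ hc.le
          have := norm_le_pi_norm (x - x0) 2
          simpa [abs_sub_comm] using this
  have := hP.add hQ
  have heq : (fun x : Fin 3 → ℝ =>
      (∫ ζ in (-h)..(x0 2), f (Function.update x 2 ζ))
        + ∫ ζ in (x0 2)..(x 2), f (Function.update x 2 ζ)) = Iv h f :=
    funext fun x => (hsplit x).symm
  exact this.congr_of_eventuallyEq (Filter.Eventually.of_forall hsplit)

lemma continuous_dF {f : (Fin 3 → ℝ) → ℝ} (hf : ContDiff ℝ (⊤ : ℕ∞) f) (x : Fin 3 → ℝ) :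
    Continuous fun ζ : ℝ => (fderiv ℝ f (Function.update x 2 ζ)).comp updCLM := by
  have h0 : Continuous fun ζ : ℝ => updCLM x + ζ • (Pi.single 2 1 : Fin 3 → ℝ) :=
    continuous_const.add (continuous_id.smul continuous_const)
  have h1 : Continuous fun ζ : ℝ => fderiv ℝ f (Function.update x 2 ζ) := by
    simpa only [update_eq, Function.comp_def] using (hf.continuous_fderiv (by simp)).comp h0
  exact h1.clm_comp continuous_const

lemma differentiable_Iv {f : (Fin 3 → ℝ) → ℝ} (hf : ContDiff ℝ (⊤ : ℕ∞) f) (h : ℝ) :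
    Differentiable ℝ (Iv h f) := fun x => (hasFDerivAt_Iv hf h x).differentiableAt

lemma continuous_Iv {f : (Fin 3 → ℝ) → ℝ} (hf : ContDiff ℝ (⊤ : ℕ∞) f) (h : ℝ) :
    Continuous (Iv h f) := (differentiable_Iv hf h).continuous

lemma fderiv_Iv {f : (Fin 3 → ℝ) → ℝ} (hf : ContDiff ℝ (⊤ : ℕ∞) f) (h : ℝ) (x : Fin 3 → ℝ) :
    fderiv ℝ (Iv h f) x = dIv h f x := (hasFDerivAt_Iv hf h x).fderiv

lemma pd_smooth {f : (Fin 3 → ℝ) → ℝ} (hf : ContDiff ℝ (⊤ : ℕ∞) f) (j : Fin 3) :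
    ContDiff ℝ (⊤ : ℕ∞) (pd j f) := by
  have h1 : ContDiff ℝ (⊤ : ℕ∞) (fderiv ℝ f) :=
    hf.fderiv_right (by exact_mod_cast le_top)
  exact (ContinuousLinearMap.apply ℝ ℝ (Pi.single j 1 : Fin 3 → ℝ)).contDiff.comp h1

lemma pd_two_Iv {f : (Fin 3 → ℝ) → ℝ} (hf : ContDiff ℝ (⊤ : ℕ∞) f) (h : ℝ) (x : Fin 3 → ℝ) :
    pd 2 (Iv h f) x = f x := by
  rw [pd, fderiv_Iv hf h x, dIv]
  rw [ContinuousLinearMap.add_apply,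
    ContinuousLinearMap.intervalIntegral_apply ((continuous_dF hf x).intervalIntegrable _ _)]
  simp [updCLM_single_two]

lemma pd_ne_Iv {f : (Fin 3 → ℝ) → ℝ} (hf : ContDiff ℝ (⊤ : ℕ∞) f) (h : ℝ) (j : Fin 3)
    (hj : j ≠ 2) (x : Fin 3 → ℝ) :
    pd j (Iv h f) x = Iv h (pd j f) x := by
  rw [pd, fderiv_Iv hf h x, dIv]
  rw [ContinuousLinearMap.add_apply,
    ContinuousLinearMap.intervalIntegral_apply ((continuous_dF hf x).intervalIntegrable _ _)]
  simp [updCLM_single j hj, Pi.single_eq_of_ne (Ne.symm hj), Iv, pd]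

lemma update_add_single (x : Fin 3 → ℝ) (ζ : ℝ) (i : Fin 3) (hi : i ≠ 2) :
    Function.update (x + Pi.single i 1) 2 ζ = Function.update x 2 ζ + Pi.single i 1 := by
  funext k
  rcases eq_or_ne k 2 with hk | hk
  · subst hk; simp [Function.update_apply, Pi.single_eq_of_ne (Ne.symm hi)]
  · simp [Function.update_apply, hk]

lemma Iv_per {f : (Fin 3 → ℝ) → ℝ} (h : ℝ) (hper : HorizPeriodic f) :
    HorizPeriodic (Iv h f) := by
  have h0 : ∀ y, f (y + Pi.single 0 1) = f y := fun y => (hper y).1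
  have h1 : ∀ y, f (y + Pi.single 1 1) = f y := fun y => (hper y).2
  intro x
  constructor
  · unfold Iv
    have e2 : (x + Pi.single 0 1 : Fin 3 → ℝ) 2 = x 2 := by
      simp [Pi.single_eq_of_ne (show (2:Fin 3) ≠ 0 by decide)]
    rw [e2]
    refine intervalIntegral.integral_congr fun ζ _ => ?_
    rw [update_add_single x ζ 0 (by decide), h0]
  · unfold Iv
    have e2 : (x + Pi.single 1 1 : Fin 3 → ℝ) 2 = x 2 := by
      simp [Pi.single_eq_of_ne (show (2:Fin 3) ≠ 1 by decide)]
    rw [e2]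
    refine intervalIntegral.integral_congr fun ζ _ => ?_
    rw [update_add_single x ζ 1 (by decide), h1]

lemma pd_mul {g k : (Fin 3 → ℝ) → ℝ} {x : Fin 3 → ℝ} (j : Fin 3)
    (hg : DifferentiableAt ℝ g x) (hk : DifferentiableAt ℝ k x) :
    pd j (fun y => g y * k y) x = pd j g x * k x + g x * pd j k x := by
  rw [pd, fderiv_fun_mul hg hk]
  simp only [ContinuousLinearMap.add_apply, ContinuousLinearMap.coe_smul', Pi.smul_apply,
    smul_eq_mul, pd]
  ring

lemma pd_neg {g : (Fin 3 → ℝ) → ℝ} {x : Fin 3 → ℝ} (j : Fin 3) :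
    pd j (fun y => -(g y)) x = -(pd j g x) := by
  rw [pd, fderiv_fun_neg]
  simp [pd]

lemma insertNth_one_eq (j : Fin 3) (y : Fin 2 → ℝ) :
    (Fin.insertNth j (1:ℝ) y : Fin 3 → ℝ)
      = (Fin.insertNth j (0:ℝ) y : Fin 3 → ℝ) + Pi.single j 1 := by
  funext i
  refine Fin.succAboveCases j ?_ ?_ i
  · simp [Fin.insertNth_apply_same]
  · intro k
    simp [Fin.insertNth_apply_succAbove, Pi.single_eq_of_ne (Fin.succAbove_ne j k)]

lemma wv_line_eq (h : ℝ) (v : Fin 2 → (Fin 3 → ℝ) → ℝ) (x : Fin 3 → ℝ) (ζ : ℝ) :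
    wv h v (Function.update x 2 ζ) = -(∫ ξ in (-h)..ζ, divH v (Function.update x 2 ξ)) := by
  rw [wv]
  simp only [Function.update_self, Function.update_idem]

lemma IBP (h : ℝ) {v : Fin 2 → (Fin 3 → ℝ) → ℝ} (hdv : ContDiff ℝ (⊤ : ℕ∞) (divH v))
    {θ : (Fin 3 → ℝ) → ℝ} (hθ : ContDiff ℝ (⊤ : ℕ∞) θ) (x : Fin 3 → ℝ) :
    Iv h (fun y => wv h v y * pd 2 θ y) x
      = wv h v x * θ x + Iv h (fun y => divH v y * θ y) x := by
  have hu : ∀ t ∈ Set.uIcc (-h) (x 2),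
      HasDerivAt (fun ζ => wv h v (Function.update x 2 ζ))
        (-(divH v (Function.update x 2 t))) t := by
    intro t _
    have hg : HasDerivAt (fun ζ => -(∫ ξ in (-h)..ζ, divH v (Function.update x 2 ξ)))
        (-(divH v (Function.update x 2 t))) t := by
      exact (intervalIntegral.integral_hasDerivAt_right
        ((continuous_line hdv.continuous x).intervalIntegrable _ _)
        ((continuous_line hdv.continuous x).stronglyMeasurableAtFilter _ _)
        (continuous_line hdv.continuous x).continuousAt).neg
    exact hg.congr_of_eventuallyEq
      (Filter.Eventually.of_forall fun ζ => wv_line_eq h v x ζ)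
  have hv' : ∀ t ∈ Set.uIcc (-h) (x 2),
      HasDerivAt (fun ζ => θ (Function.update x 2 ζ)) (pd 2 θ (Function.update x 2 t)) t :=
    fun t _ => hasDerivAt_line hθ x t
  have hu'int : IntervalIntegrable (fun t => -(divH v (Function.update x 2 t)))
      volume (-h) (x 2) := ((continuous_line hdv.continuous x).neg).intervalIntegrable _ _
  have hv'int : IntervalIntegrable (fun t => pd 2 θ (Function.update x 2 t))
      volume (-h) (x 2) := (continuous_line (pd_smooth hθ 2).continuous x).intervalIntegrable _ _
  have key := intervalIntegral.integral_mul_deriv_eq_deriv_mul hu hv' hu'int hv'int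
  have e1 : wv h v (Function.update x 2 (x 2)) = wv h v x := by rw [Function.update_eq_self]
  have e2 : wv h v (Function.update x 2 (-h)) = 0 := by
    rw [wv_line_eq, intervalIntegral.integral_same, neg_zero]
  rw [e1, e2] at key
  show (∫ ζ in (-h)..(x 2),
      wv h v (Function.update x 2 ζ) * pd 2 θ (Function.update x 2 ζ)) = _
  rw [key]
  have e3 : (∫ ζ in (-h)..(x 2),
      -(divH v (Function.update x 2 ζ)) * θ (Function.update x 2 ζ))
      = -(∫ ζ in (-h)..(x 2), divH v (Function.update x 2 ζ) * θ (Function.update x 2 ζ)) := by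
    rw [← intervalIntegral.integral_neg]
    simp
  rw [e3]
  rw [Function.update_eq_self]
  show _ = wv h v x * θ x + ∫ ζ in (-h)..(x 2),
      divH v (Function.update x 2 ζ) * θ (Function.update x 2 ζ)
  ring


/-- cancellation used in the estimate for `‖θ‖·‖∇_H Θ‖`. -/
theorem statement7
    (h : ℝ) (hh : 0 < h)
    (vt : Fin 2 → (Fin 3 → ℝ) → ℝ)
    (hvt_smooth : ∀ i, ContDiff ℝ (⊤ : ℕ∞) (vt i))
    (hvt_per : ∀ i, HorizPeriodic (vt i))
    (θ : (Fin 3 → ℝ) → ℝ)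
    (hθ_smooth : ContDiff ℝ (⊤ : ℕ∞) θ) (hθ_per : HorizPeriodic θ)
    (hdiv : ∀ x : Fin 3 → ℝ, (∫ ζ in (-h)..(0:ℝ), divH vt (Function.update x 2 ζ)) = 0) :
    (∫ x in Box h,
        ((vint h θ x) ^ 2 * θ x * adv3 vt (wv h vt) θ x
          + θ x ^ 2 * vint h θ x
              * (∫ ζ in (-h)..(x 2), adv3 vt (wv h vt) θ (Function.update x 2 ζ))))
      = ∫ x in Box h,
          θ x ^ 2 * vint h θ x
            * ((∫ ζ in (-h)..(x 2), advH vt θ (Function.update x 2 ζ))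
                - advH vt (vint h θ) x
                + (∫ ζ in (-h)..(x 2),
                    divH vt (Function.update x 2 ζ) * θ (Function.update x 2 ζ))) := by
  classical
  have hcast : ((⊤:ℕ∞) : WithTop ℕ∞) ≠ 0 := by simp
  have hθd : Differentiable ℝ θ := hθ_smooth.differentiable hcast
  have hvd : ∀ i, Differentiable ℝ (vt i) := fun i => (hvt_smooth i).differentiable hcast
  have hdvsm : ContDiff ℝ (⊤ : ℕ∞) (divH vt) :=
    (pd_smooth (hvt_smooth 0) 0).add (pd_smooth (hvt_smooth 1) 1)
  have hΘeq : vint h θ = Iv h θ := rfl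
  have hweq : wv h vt = fun x => -(Iv h (divH vt) x) := rfl
  have hΘdiff : Differentiable ℝ (vint h θ) := by rw [hΘeq]; exact differentiable_Iv hθ_smooth h
  have hwdiff : Differentiable ℝ (wv h vt) := by rw [hweq]; exact (differentiable_Iv hdvsm h).neg
  have hΘc : Continuous (vint h θ) := hΘdiff.continuous
  have hwc : Continuous (wv h vt) := hwdiff.continuous
  have hpdΘ2 : ∀ x, pd 2 (vint h θ) x = θ x := fun x => by
    rw [hΘeq]; exact pd_two_Iv hθ_smooth h x
  have hpdΘ0 : pd 0 (vint h θ) = Iv h (pd 0 θ) := funext fun x => by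
    rw [hΘeq]; exact pd_ne_Iv hθ_smooth h 0 (by decide) x
  have hpdΘ1 : pd 1 (vint h θ) = Iv h (pd 1 θ) := funext fun x => by
    rw [hΘeq]; exact pd_ne_Iv hθ_smooth h 1 (by decide) x
  have hpdw2 : ∀ x, pd 2 (wv h vt) x = -(divH vt x) := fun x => by
    rw [hweq, pd_neg 2, pd_two_Iv hdvsm h x]
  -- the function F = (θ Θ)²
  set F : (Fin 3 → ℝ) → ℝ := fun y => (θ y * vint h θ y) * (θ y * vint h θ y) with hFdef
  have hFdiff : Differentiable ℝ F := (hθd.mul hΘdiff).mul (hθd.mul hΘdiff)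
  have hFc : Continuous F := hFdiff.continuous
  have hΘper : HorizPeriodic (vint h θ) := by rw [hΘeq]; exact Iv_per h hθ_per
  have hFper : HorizPeriodic F := by
    intro x
    constructor
    · simp only [hFdef]; rw [(hθ_per x).1, (hΘper x).1]
    · simp only [hFdef]; rw [(hθ_per x).2, (hΘper x).2]
  have hpdF : ∀ (j : Fin 3) x, pd j F x
      = 2 * (θ x * vint h θ x) * (pd j θ x * vint h θ x + θ x * pd j (vint h θ) x) := by
    intro j x
    rw [hFdef, pd_mul (g := fun y => θ y * vint h θ y) (k := fun y => θ y * vint h θ y) j ((hθd x).mul (hΘdiff x)) ((hθd x).mul (hΘdiff x)),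
      pd_mul j (hθd x) (hΘdiff x)]
    ring
  -- velocity * F components
  set f0 : (Fin 3 → ℝ) → ℝ := fun y => vt 0 y * F y with hf0
  set f1 : (Fin 3 → ℝ) → ℝ := fun y => vt 1 y * F y with hf1
  set f2 : (Fin 3 → ℝ) → ℝ := fun y => wv h vt y * F y with hf2
  have hd0 : Differentiable ℝ f0 := (hvd 0).mul hFdiff
  have hd1 : Differentiable ℝ f1 := (hvd 1).mul hFdiff
  have hd2 : Differentiable ℝ f2 := hwdiff.mul hFdiff
  -- the explicit divergence
  set Dex : (Fin 3 → ℝ) → ℝ := fun x =>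
    pd 0 (vt 0) x * F x
      + vt 0 x * (2 * (θ x * vint h θ x) * (pd 0 θ x * vint h θ x + θ x * Iv h (pd 0 θ) x))
      + (pd 1 (vt 1) x * F x
      + vt 1 x * (2 * (θ x * vint h θ x) * (pd 1 θ x * vint h θ x + θ x * Iv h (pd 1 θ) x)))
      + (-(divH vt x) * F x
      + wv h vt x * (2 * (θ x * vint h θ x) * (pd 2 θ x * vint h θ x + θ x * θ x))) with hDexdef
  have hDexc : Continuous Dex := by
    rw [hDexdef]
    refine (((((pd_smooth (hvt_smooth 0) 0).continuous.mul hFc).add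
      (((hvd 0).continuous).mul (((continuous_const.mul
        ((hθ_smooth.continuous).mul hΘc)).mul
        (((pd_smooth hθ_smooth 0).continuous.mul hΘc).add
          ((hθ_smooth.continuous).mul (continuous_Iv (pd_smooth hθ_smooth 0) h))))))).add
      (((pd_smooth (hvt_smooth 1) 1).continuous.mul hFc).add
      (((hvd 1).continuous).mul (((continuous_const.mul
        ((hθ_smooth.continuous).mul hΘc)).mul
        (((pd_smooth hθ_smooth 1).continuous.mul hΘc).add
          ((hθ_smooth.continuous).mul (continuous_Iv (pd_smooth hθ_smooth 1) h)))))))).add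
      (((hdvsm.continuous.neg).mul hFc).add
      (hwc.mul (((continuous_const.mul
        ((hθ_smooth.continuous).mul hΘc)).mul
        (((pd_smooth hθ_smooth 2).continuous.mul hΘc).add
          ((hθ_smooth.continuous).mul (hθ_smooth.continuous))))))))
  have hDexp : ∀ x, (∑ i, fderiv ℝ (![f0, f1, f2] i) x (Pi.single i 1)) = Dex x := by
    intro x
    rw [Fin.sum_univ_three]
    simp only [Matrix.cons_val_zero, Matrix.cons_val_one, Matrix.head_cons,
      Matrix.cons_val_two, Matrix.tail_cons]
    have e0 : fderiv ℝ f0 x (Pi.single 0 1) = pd 0 f0 x := rfl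
    have e1 : fderiv ℝ f1 x (Pi.single 1 1) = pd 1 f1 x := rfl
    have e2 : fderiv ℝ f2 x (Pi.single 2 1) = pd 2 f2 x := rfl
    rw [e0, e1, e2, hf0, hf1, hf2,
      pd_mul 0 ((hvd 0) x) (hFdiff x), pd_mul 1 ((hvd 1) x) (hFdiff x),
      pd_mul 2 (hwdiff x) (hFdiff x),
      hpdF 0 x, hpdF 1 x, hpdF 2 x, hpdw2 x, hpdΘ0, hpdΘ1, hpdΘ2 x, hDexdef]
  -- the divergence theorem
  have hab : (![0, 0, -h] : Fin 3 → ℝ) ≤ ![1, 1, 0] := by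
    intro i
    fin_cases i <;> simp <;> linarith
  have hcompact : IsCompact (Box h) := isCompact_Icc
  have hDexInt : IntegrableOn
      (fun x => ∑ i, fderiv ℝ (![f0, f1, f2] i) x (Pi.single i 1)) (Box h) := by
    have : (fun x => ∑ i, fderiv ℝ (![f0, f1, f2] i) x (Pi.single i 1)) = Dex :=
      funext hDexp
    rw [this]
    exact hDexc.continuousOn.integrableOn_compact hcompact
  have hdivthm := MeasureTheory.integral_divergence_of_hasFDerivAt_off_countable'
    (![0, 0, -h]) (![1, 1, 0]) hab (![f0, f1, f2])
    (fun i x => fderiv ℝ (![f0, f1, f2] i) x) ∅ Set.countable_empty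
    (fun i => by fin_cases i <;>
      simp only [Matrix.cons_val_zero, Matrix.cons_val_one, Matrix.head_cons,
        Matrix.cons_val_two, Matrix.tail_cons] <;>
      exact (by first
        | exact hd0.continuous.continuousOn
        | exact hd1.continuous.continuousOn
        | exact hd2.continuous.continuousOn))
    (fun x _ i => by fin_cases i <;>
      simp only [Matrix.cons_val_zero, Matrix.cons_val_one, Matrix.head_cons,
        Matrix.cons_val_two, Matrix.tail_cons] <;>
      exact (by first
        | exact (hd0 x).hasFDerivAt
        | exact (hd1 x).hasFDerivAt
        | exact (hd2 x).hasFDerivAt))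
    hDexInt
  -- the boundary terms vanish
  have hw_top : ∀ p : Fin 3 → ℝ, p 2 = 0 → wv h vt p = 0 := by
    intro p hp
    rw [wv, hp, hdiv p, neg_zero]
  have hw_bot : ∀ p : Fin 3 → ℝ, p 2 = -h → wv h vt p = 0 := by
    intro p hp
    rw [wv, hp, intervalIntegral.integral_same, neg_zero]
  have hDex_zero : ∫ x in Box h, Dex x = 0 := by
    have hbox : Box h = Set.Icc (![0, 0, -h] : Fin 3 → ℝ) ![1, 1, 0] := rfl
    rw [show (fun x => Dex x) = (fun x => ∑ i, fderiv ℝ (![f0, f1, f2] i) x (Pi.single i 1))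
      from (funext hDexp).symm, hbox, hdivthm, Fin.sum_univ_three]
    have z0 : (∫ y in Set.Icc ((![0,0,-h] : Fin 3 → ℝ) ∘ (0:Fin 3).succAbove)
          ((![1,1,0] : Fin 3 → ℝ) ∘ (0:Fin 3).succAbove),
          (![f0, f1, f2] 0) ((0:Fin 3).insertNth ((![1,1,0] : Fin 3 → ℝ) 0) y))
        = ∫ y in Set.Icc ((![0,0,-h] : Fin 3 → ℝ) ∘ (0:Fin 3).succAbove)
          ((![1,1,0] : Fin 3 → ℝ) ∘ (0:Fin 3).succAbove),
          (![f0, f1, f2] 0) ((0:Fin 3).insertNth ((![0,0,-h] : Fin 3 → ℝ) 0) y) := by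
      refine integral_congr_ae (Filter.Eventually.of_forall fun y => ?_)
      simp only [Matrix.cons_val_zero]
      rw [show ((1:ℝ)) = (1:ℝ) from rfl, insertNth_one_eq, hf0]
      show vt 0 _ * F _ = vt 0 _ * F _
      rw [(hvt_per 0 _).1, (hFper _).1]
    have z1 : (∫ y in Set.Icc ((![0,0,-h] : Fin 3 → ℝ) ∘ (1:Fin 3).succAbove)
          ((![1,1,0] : Fin 3 → ℝ) ∘ (1:Fin 3).succAbove),
          (![f0, f1, f2] 1) ((1:Fin 3).insertNth ((![1,1,0] : Fin 3 → ℝ) 1) y))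
        = ∫ y in Set.Icc ((![0,0,-h] : Fin 3 → ℝ) ∘ (1:Fin 3).succAbove)
          ((![1,1,0] : Fin 3 → ℝ) ∘ (1:Fin 3).succAbove),
          (![f0, f1, f2] 1) ((1:Fin 3).insertNth ((![0,0,-h] : Fin 3 → ℝ) 1) y) := by
      refine integral_congr_ae (Filter.Eventually.of_forall fun y => ?_)
      simp only [Matrix.cons_val_one, Matrix.head_cons, Matrix.cons_val_zero]
      rw [show ((1:ℝ)) = (1:ℝ) from rfl, insertNth_one_eq, hf1]
      show vt 1 _ * F _ = vt 1 _ * F _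
      rw [(hvt_per 1 _).2, (hFper _).2]
    have z2top : ∀ y : Fin 2 → ℝ,
        (![f0, f1, f2] 2) ((2:Fin 3).insertNth ((![1,1,0] : Fin 3 → ℝ) 2) y) = 0 := by
      intro y
      have hp2 : ((2:Fin 3).insertNth ((![1,1,0] : Fin 3 → ℝ) 2) y : Fin 3 → ℝ) 2 = 0 :=
        Fin.insertNth_apply_same (α := fun _ : Fin 3 => ℝ) 2 _ y
      show wv h vt _ * F _ = 0
      rw [hw_top _ hp2, zero_mul]
    have z2bot : ∀ y : Fin 2 → ℝ,
        (![f0, f1, f2] 2) ((2:Fin 3).insertNth ((![0,0,-h] : Fin 3 → ℝ) 2) y) = 0 := by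
      intro y
      have hp2 : ((2:Fin 3).insertNth ((![0,0,-h] : Fin 3 → ℝ) 2) y : Fin 3 → ℝ) 2 = -h :=
        Fin.insertNth_apply_same (α := fun _ : Fin 3 => ℝ) 2 _ y
      show wv h vt _ * F _ = 0
      rw [hw_bot _ hp2, zero_mul]
    rw [z0, z1]
    have e2top : (∫ y in Set.Icc ((![0,0,-h] : Fin 3 → ℝ) ∘ (2:Fin 3).succAbove)
          ((![1,1,0] : Fin 3 → ℝ) ∘ (2:Fin 3).succAbove),
          (![f0, f1, f2] 2) ((2:Fin 3).insertNth ((![1,1,0] : Fin 3 → ℝ) 2) y)) = 0 := by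
      rw [show (fun y : Fin 2 → ℝ =>
          (![f0, f1, f2] 2) ((2:Fin 3).insertNth ((![1,1,0] : Fin 3 → ℝ) 2) y))
        = fun _ => (0:ℝ) from funext z2top]
      simp
    have e2bot : (∫ y in Set.Icc ((![0,0,-h] : Fin 3 → ℝ) ∘ (2:Fin 3).succAbove)
          ((![1,1,0] : Fin 3 → ℝ) ∘ (2:Fin 3).succAbove),
          (![f0, f1, f2] 2) ((2:Fin 3).insertNth ((![0,0,-h] : Fin 3 → ℝ) 2) y)) = 0 := by
      rw [show (fun y : Fin 2 → ℝ =>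
          (![f0, f1, f2] 2) ((2:Fin 3).insertNth ((![0,0,-h] : Fin 3 → ℝ) 2) y))
        = fun _ => (0:ℝ) from funext z2bot]
      simp
    rw [e2top, e2bot]
    ring
  -- the pointwise identity
  have hadvHsm : ContDiff ℝ (⊤ : ℕ∞) (advH vt θ) :=
    ((hvt_smooth 0).mul (pd_smooth hθ_smooth 0)).add ((hvt_smooth 1).mul (pd_smooth hθ_smooth 1))
  have hkey : ∀ x : Fin 3 → ℝ,
      (vint h θ x) ^ 2 * θ x * adv3 vt (wv h vt) θ x
        + θ x ^ 2 * vint h θ x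
            * (∫ ζ in (-h)..(x 2), adv3 vt (wv h vt) θ (Function.update x 2 ζ))
      = θ x ^ 2 * vint h θ x
            * ((∫ ζ in (-h)..(x 2), advH vt θ (Function.update x 2 ζ))
                - advH vt (vint h θ) x
                + (∫ ζ in (-h)..(x 2),
                    divH vt (Function.update x 2 ζ) * θ (Function.update x 2 ζ)))
          + Dex x / 2 := by
    intro x
    have hsplit : (∫ ζ in (-h)..(x 2), adv3 vt (wv h vt) θ (Function.update x 2 ζ))
        = Iv h (advH vt θ) x + (wv h vt x * θ x + Iv h (fun y => divH vt y * θ y) x) := by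
      have hasum : ∀ y, adv3 vt (wv h vt) θ y
          = advH vt θ y + wv h vt y * pd 2 θ y := fun y => rfl
      have : (∫ ζ in (-h)..(x 2), adv3 vt (wv h vt) θ (Function.update x 2 ζ))
          = Iv h (advH vt θ) x + Iv h (fun y => wv h vt y * pd 2 θ y) x := by
        show Iv h (adv3 vt (wv h vt) θ) x = _
        rw [show adv3 vt (wv h vt) θ = fun y => advH vt θ y + wv h vt y * pd 2 θ y
          from funext hasum]
        show (∫ ζ in (-h)..(x 2),
            (advH vt θ (Function.update x 2 ζ)
              + wv h vt (Function.update x 2 ζ) * pd 2 θ (Function.update x 2 ζ))) = _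
        rw [intervalIntegral.integral_add
          ((continuous_line hadvHsm.continuous x).intervalIntegrable _ _)
          ((continuous_line (f := fun y => wv h vt y * pd 2 θ y) (hwc.mul (pd_smooth hθ_smooth 2).continuous) x).intervalIntegrable _ _)]
        rfl
      rw [this, IBP h hdvsm hθ_smooth x]
    rw [hsplit]
    have hIv1 : (∫ ζ in (-h)..(x 2), advH vt θ (Function.update x 2 ζ))
        = Iv h (advH vt θ) x := rfl
    have hIv2 : (∫ ζ in (-h)..(x 2),
        divH vt (Function.update x 2 ζ) * θ (Function.update x 2 ζ))
        = Iv h (fun y => divH vt y * θ y) x := rfl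
    rw [hIv1, hIv2]
    have hadvHΘ : advH vt (vint h θ) x
        = vt 0 x * pd 0 (vint h θ) x + vt 1 x * pd 1 (vint h θ) x := rfl
    have hadv3x : adv3 vt (wv h vt) θ x
        = vt 0 x * pd 0 θ x + vt 1 x * pd 1 θ x + wv h vt x * pd 2 θ x := rfl
    have hdivx : divH vt x = pd 0 (vt 0) x + pd 1 (vt 1) x := rfl
    rw [hadvHΘ, hadv3x, hpdΘ0, hpdΘ1, hDexdef, hFdef]
    simp only [hdivx]
    ring
  -- assembly
  have hRc : Continuous (fun x => θ x ^ 2 * vint h θ x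
      * ((∫ ζ in (-h)..(x 2), advH vt θ (Function.update x 2 ζ))
          - advH vt (vint h θ) x
          + (∫ ζ in (-h)..(x 2),
              divH vt (Function.update x 2 ζ) * θ (Function.update x 2 ζ)))) := by
    have c1 : Continuous (Iv h (advH vt θ)) := continuous_Iv hadvHsm h
    have c2 : Continuous (fun x => advH vt (vint h θ) x) := by
      have : (fun x => advH vt (vint h θ) x)
          = fun x => vt 0 x * Iv h (pd 0 θ) x + vt 1 x * Iv h (pd 1 θ) x := by
        funext x
        rw [show advH vt (vint h θ) x
          = vt 0 x * pd 0 (vint h θ) x + vt 1 x * pd 1 (vint h θ) x from rfl, hpdΘ0, hpdΘ1]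
      rw [this]
      exact ((hvd 0).continuous.mul (continuous_Iv (pd_smooth hθ_smooth 0) h)).add
        ((hvd 1).continuous.mul (continuous_Iv (pd_smooth hθ_smooth 1) h))
    have c3 : Continuous (Iv h (fun y => divH vt y * θ y)) :=
      continuous_Iv (hdvsm.mul hθ_smooth) h
    exact ((hθ_smooth.continuous.pow 2).mul hΘc).mul ((c1.sub c2).add c3)
  have hRint : IntegrableOn (fun x => θ x ^ 2 * vint h θ x
      * ((∫ ζ in (-h)..(x 2), advH vt θ (Function.update x 2 ζ))
          - advH vt (vint h θ) x
          + (∫ ζ in (-h)..(x 2),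
              divH vt (Function.update x 2 ζ) * θ (Function.update x 2 ζ)))) (Box h) :=
    hRc.continuousOn.integrableOn_compact hcompact
  have hDint : IntegrableOn (fun x => Dex x / 2) (Box h) :=
    (hDexc.continuousOn.integrableOn_compact hcompact).div_const 2
  calc (∫ x in Box h,
        ((vint h θ x) ^ 2 * θ x * adv3 vt (wv h vt) θ x
          + θ x ^ 2 * vint h θ x
              * (∫ ζ in (-h)..(x 2), adv3 vt (wv h vt) θ (Function.update x 2 ζ))))
      = ∫ x in Box h, (θ x ^ 2 * vint h θ x
            * ((∫ ζ in (-h)..(x 2), advH vt θ (Function.update x 2 ζ))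
                - advH vt (vint h θ) x
                + (∫ ζ in (-h)..(x 2),
                    divH vt (Function.update x 2 ζ) * θ (Function.update x 2 ζ)))
          + Dex x / 2) := integral_congr_ae (Filter.Eventually.of_forall hkey)
    _ = (∫ x in Box h, θ x ^ 2 * vint h θ x
            * ((∫ ζ in (-h)..(x 2), advH vt θ (Function.update x 2 ζ))
                - advH vt (vint h θ) x
                + (∫ ζ in (-h)..(x 2),
                    divH vt (Function.update x 2 ζ) * θ (Function.update x 2 ζ))))
          + ∫ x in Box h, Dex x / 2 := integral_add hRint hDint
    _ = ∫ x in Box h, θ x ^ 2 * vint h θ x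
            * ((∫ ζ in (-h)..(x 2), advH vt θ (Function.update x 2 ζ))
                - advH vt (vint h θ) x
                + (∫ ζ in (-h)..(x 2),
                    divH vt (Function.update x 2 ζ) * θ (Function.update x 2 ζ))) := by
        rw [integral_div, hDex_zero]
        simp
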